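/- Let n ≥ 2 and d ≥ 1. For 1 ≤ k ≤ d+1, let g_k(x₁,x₂) = x₁^{d-k+1}·(x₁+x₂)^{k-1}, regarded as a real form of degree d in n variables. Then g_k² ∈ Σ_{n,2d}^k but g_k² ∉ Σ_{n,2d}^{k-1}. -/

import Mathlib

open MvPolynomial

/-- `F_{n,d}^k`: real forms of degree `d` in `n` variables with at most `k` monomials. -/
def IsFormK (n d k : ℕ) (h : MvPolynomial (Fin n) ℝ) : Prop :=
  h.IsHomogeneous d ∧ h.support.card ≤ k

/-- `Σ_{n,2d}^k`: finite sums of squares of forms in `F_{n,d}^k`. -/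
def SigmaSOS (n d k : ℕ) : Set (MvPolynomial (Fin n) ℝ) :=
  { p | ∃ (m : ℕ) (f : Fin m → MvPolynomial (Fin n) ℝ),
      (∀ j, IsFormK n d k (f j)) ∧ p = ∑ j, (f j) ^ 2 }


open Finset

/-- A sum of squares of real multivariate polynomials is zero iff each is zero. -/
lemma sos_eq_zero {σ : Type*} {m : ℕ} (h : Fin m → MvPolynomial σ ℝ)
    (H : ∑ j, h j ^ 2 = 0) (j : Fin m) : h j = 0 := by
  apply MvPolynomial.funext
  intro x
  have hx : ∑ j, (eval x (h j)) ^ 2 = 0 := by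
    have := congrArg (eval x) H
    simpa [map_sum] using this
  have h2 := (Finset.sum_eq_zero_iff_of_nonneg
    (fun i _ => sq_nonneg (eval x (h i)))).mp hx j (mem_univ j)
  have := pow_eq_zero_iff (n := 2) (by norm_num) |>.mp h2
  simpa using this

/-- `X i` divides `p` iff every monomial of `p` involves variable `i`. -/
lemma X_dvd_iff_support {σ : Type*} (i : σ) (p : MvPolynomial σ ℝ) :
    X i ∣ p ↔ ∀ m ∈ p.support, m i ≠ 0 := by
  rw [MvPolynomial.X_dvd_iff_modMonomial_eq_zero]
  constructor
  · intro h m hm hmi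
    have h1 : ¬ Finsupp.single i 1 ≤ m := by
      rw [Finsupp.single_le_iff]; omega
    have h2 := coeff_modMonomial_of_not_le (s' := m) (s := Finsupp.single i 1) p h1
    rw [h] at h2
    simp only [coeff_zero] at h2
    exact (mem_support_iff.mp hm) h2.symm
  · intro h
    ext m
    rcases Nat.eq_zero_or_pos (m i) with h0 | h0
    · rw [coeff_modMonomial_of_not_le _ (by rw [Finsupp.single_le_iff]; omega)]
      simp only [coeff_zero]
      by_contra hne
      exact h m (mem_support_iff.mpr hne) h0
    · rw [coeff_modMonomial_of_le _ (by rw [Finsupp.single_le_iff]; omega)]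
      simp

/-- The substitution sending `X i` to `0` and all other variables to themselves. -/
noncomputable def killVar {σ : Type*} [DecidableEq σ] (i : σ) :
    MvPolynomial σ ℝ →ₐ[ℝ] MvPolynomial σ ℝ :=
  aeval (fun l => if l = i then 0 else X l)

lemma killVar_monomial {σ : Type*} [DecidableEq σ] (i : σ) (m : σ →₀ ℕ) (c : ℝ) :
    killVar i (monomial m c) = if m i = 0 then monomial m c else 0 := by
  rw [killVar, aeval_monomial]
  split_ifs with h
  · have hprod : (m.prod fun l e => (if l = i then (0 : MvPolynomial σ ℝ) else X l) ^ e)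
        = m.prod fun l e => X l ^ e := by
      apply Finsupp.prod_congr
      intro l hl
      have hli : l ≠ i := fun e => by
        subst e; exact (Finsupp.mem_support_iff.mp hl) h
      simp [hli]
    rw [hprod, monomial_eq, algebraMap_eq]
  · have hi : i ∈ m.support := Finsupp.mem_support_iff.mpr h
    rw [Finsupp.prod, Finset.prod_eq_zero hi (by simp [zero_pow h])]
    simp

lemma X_dvd_of_killVar_eq_zero {σ : Type*} [DecidableEq σ] (i : σ)
    (p : MvPolynomial σ ℝ) (hp : killVar i p = 0) : X i ∣ p := by
  rw [X_dvd_iff_support]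
  intro m hm hmi
  apply mem_support_iff.mp hm
  have key : coeff m (killVar i p) = coeff m p := by
    conv_lhs => rw [as_sum p, map_sum]
    rw [coeff_sum]
    rw [Finset.sum_congr rfl (fun v _ => congrArg (coeff m) (killVar_monomial i v _))]
    rw [Finset.sum_eq_single_of_mem m hm]
    · simp [hmi]
    · intro v _ hvm
      split_ifs with h
      · simp [coeff_monomial, hvm]
      · simp
  rw [hp] at key
  simpa using key.symm

lemma X_dvd_of_sos {σ : Type*} [DecidableEq σ] (i : σ) {m : ℕ}
    (h : Fin m → MvPolynomial σ ℝ) (q : MvPolynomial σ ℝ)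
    (H : ∑ j, h j ^ 2 = X i * q) (j : Fin m) : X i ∣ h j := by
  apply X_dvd_of_killVar_eq_zero
  apply sos_eq_zero (fun j => killVar i (h j))
  have hXi : killVar i (X i) = 0 := by simp [killVar]
  have := congrArg (killVar i) H
  simp only [map_sum, map_mul, map_pow, hXi, zero_mul] at this
  exact this

lemma pow_dvd_of_sos {σ : Type*} [DecidableEq σ] (i : σ) (a : ℕ) :
    ∀ {m : ℕ} (h : Fin m → MvPolynomial σ ℝ) (w : MvPolynomial σ ℝ),
      (∑ j, h j ^ 2) = X i ^ (2 * a) * w → ∀ j, X i ^ a ∣ h j := by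
  induction a with
  | zero => intro m h w H j; simpa using one_dvd _
  | succ a ih =>
    intro m h w H j
    have hdvd : ∀ j, X i ∣ h j := fun j =>
      X_dvd_of_sos i h (X i ^ (2 * a + 1) * w) (by rw [H]; ring) j
    choose u hu using hdvd
    have hcan : (X i : MvPolynomial σ ℝ) ^ 2 * (∑ j, u j ^ 2)
        = X i ^ 2 * (X i ^ (2 * a) * w) := by
      calc (X i : MvPolynomial σ ℝ) ^ 2 * (∑ j, u j ^ 2)
          = ∑ j, (X i * u j) ^ 2 := by
            rw [Finset.mul_sum]; exact Finset.sum_congr rfl (fun j _ => by ring)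
        _ = ∑ j, h j ^ 2 := Finset.sum_congr rfl (fun j _ => by rw [← hu j])
        _ = X i ^ (2 * (a + 1)) * w := H
        _ = X i ^ 2 * (X i ^ (2 * a) * w) := by ring
    have Hu : ∑ j, u j ^ 2 = X i ^ (2 * a) * w :=
      mul_left_cancel₀ (pow_ne_zero _ (X_ne_zero i)) hcan
    have := ih u w Hu j
    rw [hu j, pow_succ']
    exact mul_dvd_mul_left (X i) this

/-- The shear substitution `X i1 ↦ X i1 + c • X i0`, fixing all other variables. -/
noncomputable def shear {σ : Type*} [DecidableEq σ] (i0 i1 : σ) (c : ℝ) :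
    MvPolynomial σ ℝ →ₐ[ℝ] MvPolynomial σ ℝ :=
  aeval (fun l => if l = i1 then X i1 + C c * X i0 else X l)

lemma shear_X0 {σ : Type*} [DecidableEq σ] {i0 i1 : σ} (hne : i0 ≠ i1) (c : ℝ) :
    shear i0 i1 c (X i0) = X i0 := by simp [shear, hne]

lemma shear_X1 {σ : Type*} [DecidableEq σ] (i0 i1 : σ) (c : ℝ) :
    shear i0 i1 c (X i1) = X i1 + C c * X i0 := by simp [shear]

lemma shear_C {σ : Type*} [DecidableEq σ] (i0 i1 : σ) (c r : ℝ) :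
    shear i0 i1 c (C r) = C r := by simp [shear]

lemma shear_shear {σ : Type*} [DecidableEq σ] {i0 i1 : σ} (hne : i0 ≠ i1) (c : ℝ)
    (p : MvPolynomial σ ℝ) : shear i0 i1 (-c) (shear i0 i1 c p) = p := by
  have hcomp : (shear i0 i1 (-c)).comp (shear i0 i1 c) = AlgHom.id ℝ (MvPolynomial σ ℝ) := by
    apply MvPolynomial.algHom_ext
    intro l
    by_cases hl : l = i1
    · subst hl
      rw [AlgHom.comp_apply, AlgHom.id_apply, shear_X1, map_add, map_mul, shear_X1,
        shear_X0 hne, shear_C, map_neg]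
      ring
    · simp [AlgHom.comp_apply, shear, hl]
  calc shear i0 i1 (-c) (shear i0 i1 c p)
      = ((shear i0 i1 (-c)).comp (shear i0 i1 c)) p := rfl
    _ = p := by rw [hcomp]; rfl

lemma sum_pow_dvd_of_sos {σ : Type*} [DecidableEq σ] {i0 i1 : σ} (hne : i0 ≠ i1) (b : ℕ)
    {m : ℕ} (h : Fin m → MvPolynomial σ ℝ) (w : MvPolynomial σ ℝ)
    (H : ∑ j, h j ^ 2 = (X i0 + X i1) ^ (2 * b) * w) (j : Fin m) :
    (X i0 + X i1) ^ b ∣ h j := by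
  set τ := shear i0 i1 (-1) with hτ
  have hτs : τ (X i0 + X i1) = X i1 := by
    rw [map_add, shear_X0 hne, shear_X1]
    rw [map_neg, map_one]
    ring
  have H' : ∑ j, τ (h j) ^ 2 = X i1 ^ (2 * b) * τ w := by
    have := congrArg τ H
    simpa only [map_sum, map_pow, map_mul, hτs] using this
  obtain ⟨v, hv⟩ := pow_dvd_of_sos i1 b _ (τ w) H' j
  refine ⟨shear i0 i1 1 v, ?_⟩
  have h1 : shear i0 i1 1 (τ (h j)) = h j := by
    have := shear_shear hne (-1) (h j)
    simpa using this
  calc h j = shear i0 i1 1 (τ (h j)) := h1.symm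
    _ = shear i0 i1 1 (X i1 ^ b * v) := by rw [hv]
    _ = (X i1 + C 1 * X i0) ^ b * shear i0 i1 1 v := by
        rw [map_mul, map_pow, shear_X1]
    _ = (X i0 + X i1) ^ b * shear i0 i1 1 v := by rw [C_1]; ring

lemma top_component_ne_zero {σ : Type*} (w : MvPolynomial σ ℝ) (hw : w ≠ 0) :
    homogeneousComponent w.totalDegree w ≠ 0 := by
  obtain ⟨m, hm, hdeg⟩ := Finset.exists_mem_eq_sup w.support (support_nonempty.mpr hw)
    (fun s => s.sum fun _ e => e)
  intro h0
  have hc := coeff_homogeneousComponent w.totalDegree w m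
  rw [h0] at hc
  have hdm : m.degree = w.totalDegree := by
    rw [totalDegree_eq] at *
    simpa [Finsupp.degree_apply, Finsupp.sum] using hdeg.symm
  rw [if_pos hdm] at hc
  simp only [coeff_zero] at hc
  exact mem_support_iff.mp hm hc.symm

lemma eq_C_mul_of_homog {σ : Type*} {d : ℕ} {g w p : MvPolynomial σ ℝ}
    (hg : g.IsHomogeneous d) (hp : p.IsHomogeneous d) (hgw : p = g * w) (hg0 : g ≠ 0) :
    ∃ c : ℝ, w = C c := by
  by_cases hw : w = 0
  · exact ⟨0, by simp [hw]⟩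
  set E := w.totalDegree with hE
  rcases Nat.eq_zero_or_pos E with h0 | hpos
  · refine ⟨coeff 0 w, ?_⟩
    have hs := sum_homogeneousComponent w
    rw [← hE, h0] at hs
    simp only [zero_add, Finset.range_one, Finset.sum_singleton,
      homogeneousComponent_zero] at hs
    exact hs.symm
  · exfalso
    have hsum := sum_homogeneousComponent w
    rw [← hE] at hsum
    have hP : p = ∑ e ∈ range (E + 1), g * homogeneousComponent e w := by
      rw [hgw, ← Finset.mul_sum, hsum]
    have h1 : homogeneousComponent (d + E) p = 0 := by
      rw [homogeneousComponent_of_mem ((mem_homogeneousSubmodule _ _).mpr hp)]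
      rw [if_neg (show ¬ (d + E = d) by omega)]
    have h2 : homogeneousComponent (d + E) p = g * homogeneousComponent E w := by
      rw [hP, map_sum]
      rw [Finset.sum_congr rfl (fun e _ => homogeneousComponent_of_mem
        ((mem_homogeneousSubmodule _ _).mpr (hg.mul (homogeneousComponent_isHomogeneous e w))))]
      rw [Finset.sum_eq_single_of_mem E (self_mem_range_succ E)]
      · rw [if_pos rfl]
      · intro e _ he
        rw [if_neg (show ¬ (d + E = d + e) by omega)]
    have hmul : g * homogeneousComponent E w = 0 := by rw [← h2, h1]
    rcases mul_eq_zero.mp hmul with h | h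
    · exact hg0 h
    · exact top_component_ne_zero w hw h

lemma support_sum_monomial_eq {σ ι : Type*} [DecidableEq σ] (s : Finset ι)
    (ν : ι → (σ →₀ ℕ)) (c : ι → ℝ)
    (hinj : ∀ x ∈ s, ∀ y ∈ s, ν x = ν y → x = y) (hc : ∀ i ∈ s, c i ≠ 0) :
    (∑ i ∈ s, monomial (ν i) (c i)).support = s.image ν := by
  ext m
  rw [mem_support_iff, coeff_sum]
  simp only [coeff_monomial]
  constructor
  · intro hne0
    by_contra hmem
    apply hne0
    apply Finset.sum_eq_zero
    intro i hi
    rw [if_neg]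
    intro h
    exact hmem (Finset.mem_image.mpr ⟨i, hi, h⟩)
  · intro hm
    obtain ⟨i, hi, rfl⟩ := Finset.mem_image.mp hm
    rw [Finset.sum_eq_single_of_mem i hi]
    · rw [if_pos rfl]; exact hc i hi
    · intro j hj hji
      rw [if_neg (fun h => hji (hinj j hj i hi h))]

theorem gk_sq_separates (n d k : ℕ) (hn : 2 ≤ n) (hd : 1 ≤ d)
    (hk1 : 1 ≤ k) (hk : k ≤ d + 1)
    (g : MvPolynomial (Fin n) ℝ)
    (hg : g = X (⟨0, by omega⟩ : Fin n) ^ (d - (k - 1)) *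
      (X (⟨0, by omega⟩ : Fin n) + X (⟨1, by omega⟩ : Fin n)) ^ (k - 1)) :
    g ^ 2 ∈ SigmaSOS n d k ∧ g ^ 2 ∉ SigmaSOS n d (k - 1) := by
  have h0n : 0 < n := by omega
  have h1n : 1 < n := by omega
  set i0 : Fin n := ⟨0, by omega⟩ with hi0
  set i1 : Fin n := ⟨1, by omega⟩ with hi1
  have hne : i0 ≠ i1 := by
    intro h
    have := congrArg Fin.val h
    simp [hi0, hi1] at this
  set a : ℕ := d - (k - 1) with ha
  set b : ℕ := k - 1 with hb
  have hab : a + b = d := by omega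
  set ν : ℕ → (Fin n →₀ ℕ) :=
    fun i => Finsupp.single i0 (a + i) + Finsupp.single i1 (b - i) with hν
  -- the binomial expansion of g
  have hgexp : g = ∑ i ∈ range (b + 1), monomial (ν i) ((b.choose i : ℝ)) := by
    rw [hg, add_pow, Finset.mul_sum]
    apply Finset.sum_congr rfl
    intro i hi
    have h1 : monomial (ν i) ((b.choose i : ℝ))
        = C ((b.choose i : ℝ)) * X i0 ^ (a + i) * X i1 ^ (b - i) := by
      rw [X_pow_eq_monomial, X_pow_eq_monomial, C_mul_monomial, monomial_mul]
      simp [hν]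
    rw [h1, ← map_natCast (C : ℝ →+* MvPolynomial (Fin n) ℝ) (b.choose i)]
    ring
  have hνval : ∀ x, (ν x) i1 = b - x := by
    intro x
    simp [hν, Finsupp.single_apply, hne]
  have hinj : ∀ x ∈ range (b + 1), ∀ y ∈ range (b + 1), ν x = ν y → x = y := by
    intro x hx y hy hxy
    have : (ν x) i1 = (ν y) i1 := by rw [hxy]
    rw [hνval, hνval] at this
    rw [mem_range] at hx hy
    omega
  have hsupp : g.support = (range (b + 1)).image ν := by
    rw [hgexp]
    apply support_sum_monomial_eq _ _ _ hinj
    intro i hi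
    rw [mem_range] at hi
    exact Nat.cast_ne_zero.mpr (Nat.choose_pos (by omega)).ne'
  have hcards : g.support.card = b + 1 := by
    rw [hsupp, Finset.card_image_of_injOn (fun x hx y hy h => hinj x hx y hy h),
      Finset.card_range]
  have hghom : g.IsHomogeneous d := by
    rw [hg]
    have h1 : (X i0 ^ a : MvPolynomial (Fin n) ℝ).IsHomogeneous a := isHomogeneous_X_pow i0 a
    have h2 : ((X i0 + X i1 : MvPolynomial (Fin n) ℝ) ^ b).IsHomogeneous (1 * b) :=
      ((isHomogeneous_X ℝ i0).add (isHomogeneous_X ℝ i1)).pow b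
    have h3 := h1.mul h2
    rw [show a + 1 * b = d by omega] at h3
    exact h3
  have hg0 : g ≠ 0 := by
    rw [← support_nonempty, hsupp]
    exact (Finset.nonempty_range_add_one).image ν
  constructor
  · refine ⟨1, fun _ => g, fun j => ⟨hghom, ?_⟩, by simp⟩
    rw [hcards]; omega
  · rintro ⟨M, f, hf, hsum⟩
    have hGsq : ∑ j, f j ^ 2 = X i0 ^ (2 * a) * (X i0 + X i1) ^ (2 * b) := by
      rw [← hsum, hg]; ring
    choose u hu using pow_dvd_of_sos i0 a f ((X i0 + X i1) ^ (2 * b)) hGsq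
    have hcan : (X i0 : MvPolynomial (Fin n) ℝ) ^ (2 * a) * (∑ j, u j ^ 2)
        = X i0 ^ (2 * a) * ((X i0 + X i1) ^ (2 * b) * 1) := by
      calc (X i0 : MvPolynomial (Fin n) ℝ) ^ (2 * a) * (∑ j, u j ^ 2)
          = ∑ j, (X i0 ^ a * u j) ^ 2 := by
            rw [Finset.mul_sum]; exact Finset.sum_congr rfl (fun j _ => by ring)
        _ = ∑ j, f j ^ 2 := Finset.sum_congr rfl (fun j _ => by rw [← hu j])
        _ = X i0 ^ (2 * a) * ((X i0 + X i1) ^ (2 * b) * 1) := by rw [hGsq]; ring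
    have hUsq : ∑ j, u j ^ 2 = (X i0 + X i1) ^ (2 * b) * 1 :=
      mul_left_cancel₀ (pow_ne_zero _ (X_ne_zero i0)) hcan
    choose v hv using sum_pow_dvd_of_sos hne b u 1 hUsq
    have hfj : ∀ j, f j = g * v j := by
      intro j
      rw [hu j, hv j, hg]; ring
    have hex : ∃ j, f j ≠ 0 := by
      by_contra hall
      push_neg at hall
      have hz : g ^ 2 = 0 := by
        rw [hsum]
        exact Finset.sum_eq_zero (fun j _ => by rw [hall j]; ring)
      exact hg0 ((pow_eq_zero_iff two_ne_zero).mp hz)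
    obtain ⟨j0, hj0⟩ := hex
    obtain ⟨c, hc⟩ := eq_C_mul_of_homog hghom (hf j0).1 (hfj j0) hg0
    have hcne : c ≠ 0 := by
      intro h
      apply hj0
      rw [hfj j0, hc, h]
      simp
    have hsupf : (f j0).support = g.support := by
      ext mm
      rw [hfj j0, hc, mul_comm]
      rw [mem_support_iff, mem_support_iff, coeff_C_mul]
      simp [hcne]
    have hle := (hf j0).2
    rw [hsupf, hcards] at hle
    omega
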